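/- Let η = diag(1,−1,−1,−1), let u ∈ ℝ⁴ satisfy η_{μν}u^μu^ν = 1, and let ψ ∈ ℝ⁴ be a real covector. Set B = u^μψ_μ, V^α = (η^{αμ} − u^αu^μ)ψ_μ, and V² = η_{αβ}V^αV^β. Let E > 0, τ > 0, and c², ζ ∈ ℝ satisfy 0 ≤ c² + ζ/(τ E) ≤ 1. If ψ satisfies the nontrivial characteristic equation τ E B² + [τ c² E + ζ] V² = 0, then ψ is non-timelike: η^{μν} ψ_μ ψ_ν = B² + V² ≤ 0. (This is the nonlinear causality of the Müller–Israel–Stewart theory with bulk viscosity: under 0 ≤ c² + ζ/(τ(e+p+Π)) ≤ 1 all characteristic covectors lie outside or on the light cone.) -/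

import Mathlib

open scoped BigOperators

/-- The Minkowski metric `η = diag(1,-1,-1,-1)` on `ℝ⁴`. -/
noncomputable def minkowskiEta : Matrix (Fin 4) (Fin 4) ℝ :=
  Matrix.diagonal ![1, -1, -1, -1]

set_option maxHeartbeats 1000000 in
/-- Nonlinear causality of the Müller–Israel–Stewart theory with bulk
viscosity.  Let `u` be a unit timelike vector, `ψ` a real covector, `B = u^μψ_μ`,
`V^α = (η^{αμ} − u^αu^μ)ψ_μ`, `V² = η_{αβ}V^αV^β`.  If `E > 0`, `τ > 0`,
`0 ≤ c² + ζ/(τE) ≤ 1`, and `ψ` satisfies the nontrivial characteristic equation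
`τ E B² + (τ c² E + ζ) V² = 0`, then `ψ` is non-timelike:
`η^{μν}ψ_μψ_ν = B² + V² ≤ 0`. -/
theorem MIS_bulk_nonlinear_causality (u ψ : Fin 4 → ℝ)
    (hu : ∑ μ, ∑ ν, minkowskiEta μ ν * u μ * u ν = 1)
    (B : ℝ) (hB : B = ∑ μ, u μ * ψ μ)
    (V : Fin 4 → ℝ) (hV : ∀ a, V a = ∑ μ, (minkowskiEta a μ - u a * u μ) * ψ μ)
    (V2 : ℝ) (hV2 : V2 = ∑ a, ∑ b, minkowskiEta a b * V a * V b)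
    (E τ c2 ζ : ℝ) (hE : 0 < E) (hτ : 0 < τ)
    (hcaus0 : 0 ≤ c2 + ζ / (τ * E)) (hcaus1 : c2 + ζ / (τ * E) ≤ 1)
    (hchar : τ * E * B ^ 2 + (τ * c2 * E + ζ) * V2 = 0) :
    (∑ μ, ∑ ν, minkowskiEta μ ν * ψ μ * ψ ν) = B ^ 2 + V2 ∧ B ^ 2 + V2 ≤ 0 := by
  have hτE : 0 < τ * E := mul_pos hτ hE
  have hV0 := hV 0; have hV1 := hV 1; have hV2' := hV 2; have hV3 := hV 3
  simp only [minkowskiEta, Fin.sum_univ_four, Matrix.diagonal_apply] at hu hV0 hV1 hV2' hV3 hV2 ⊢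
  norm_num [Fin.ext_iff] at hu hV0 hV1 hV2' hV3 hV2 ⊢
  simp only [Matrix.cons_val] at hu hV0 hV1 hV2' hV3 hV2 ⊢
  rw [Fin.sum_univ_four] at hB
  have orth : u 0 * V 0 - u 1 * V 1 - u 2 * V 2 - u 3 * V 3 = 0 := by
    rw [hV0, hV1, hV2', hV3]
    linear_combination (-(u 0 * ψ 0 + u 1 * ψ 1 + u 2 * ψ 2 + u 3 * ψ 3)) * hu
  have cs : (u 1 * V 1 + u 2 * V 2 + u 3 * V 3) ^ 2
      ≤ (u 1 ^ 2 + u 2 ^ 2 + u 3 ^ 2) * (V 1 ^ 2 + V 2 ^ 2 + V 3 ^ 2) := by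
    nlinarith [sq_nonneg (u 1 * V 2 - u 2 * V 1), sq_nonneg (u 1 * V 3 - u 3 * V 1),
      sq_nonneg (u 2 * V 3 - u 3 * V 2)]
  have hu0 : u 0 ^ 2 = 1 + u 1 ^ 2 + u 2 ^ 2 + u 3 ^ 2 := by linear_combination hu
  have hu0sq : 1 ≤ u 0 ^ 2 := by nlinarith [sq_nonneg (u 1), sq_nonneg (u 2), sq_nonneg (u 3)]
  have hA : u 0 ^ 2 * V 0 ^ 2 ≤ (u 0 ^ 2 - 1) * (V 1 ^ 2 + V 2 ^ 2 + V 3 ^ 2) := by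
    have h : u 0 * V 0 = u 1 * V 1 + u 2 * V 2 + u 3 * V 3 := by linarith
    calc u 0 ^ 2 * V 0 ^ 2 = (u 0 * V 0) ^ 2 := by ring
      _ = (u 1 * V 1 + u 2 * V 2 + u 3 * V 3) ^ 2 := by rw [h]
      _ ≤ (u 1 ^ 2 + u 2 ^ 2 + u 3 ^ 2) * (V 1 ^ 2 + V 2 ^ 2 + V 3 ^ 2) := cs
      _ = (u 0 ^ 2 - 1) * (V 1 ^ 2 + V 2 ^ 2 + V 3 ^ 2) := by rw [hu0]; ring
  have hVnp : V2 ≤ 0 := by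
    have hS : 0 ≤ V 1 ^ 2 + V 2 ^ 2 + V 3 ^ 2 := by positivity
    have hP : V 0 ^ 2 ≤ V 1 ^ 2 + V 2 ^ 2 + V 3 ^ 2 := by nlinarith [hA, hS, hu0sq]
    rw [hV2]; nlinarith [hP]
  have key : τ * E * (c2 + ζ / (τ * E)) = τ * c2 * E + ζ := by field_simp
  have hk0 : 0 ≤ τ * c2 * E + ζ := key ▸ mul_nonneg hτE.le hcaus0
  have hk1 : τ * c2 * E + ζ ≤ τ * E := by
    have h := mul_le_mul_of_nonneg_left hcaus1 hτE.le
    rw [key] at h; simpa using h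
  constructor
  · rw [hV2, hV0, hV1, hV2', hV3, hB]
    linear_combination (-(u 0 * ψ 0 + u 1 * ψ 1 + u 2 * ψ 2 + u 3 * ψ 3) ^ 2) * hu
  · nlinarith [hchar, hVnp, hk0, hk1, hτE,
      mul_nonneg (sub_nonneg.2 hk1) (neg_nonneg.2 hVnp)]
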